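/- For any probability distribution p on N ≥ 3 points, S_α(p) ≥ JS_α(p) when 0 < α < 2 (α ≠ 1), and S_α(p) ≤ JS_α(p) when α > 2. -/

import Mathlib

open Set Finset

lemma phi_hasDerivAt {α x : ℝ} (hx : x ≠ 0) (hx1 : (1:ℝ) - x ≠ 0) :
    HasDerivAt (fun x : ℝ => (1-x)^α - x^α + 2*x - 1)
      (-(α*(1-x)^(α-1)) - α*x^(α-1) + 2) x := by
  have h1 : HasDerivAt (fun x : ℝ => (1-x)^α) (-1 * α * (1-x)^(α-1)) x := by
    simpa using HasDerivAt.rpow_const (p := α) ((hasDerivAt_id x).const_sub 1) (Or.inl hx1)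
  have h2 : HasDerivAt (fun x : ℝ => x^α) (α*x^(α-1)) x :=
    Real.hasDerivAt_rpow_const (Or.inl hx)
  have h3 : HasDerivAt (fun x : ℝ => 2*x - 1) 2 x := by
    simpa using (((hasDerivAt_id x).const_mul (2:ℝ)).sub_const 1)
  have h := (h1.sub h2).add h3
  convert h using 1
  · rfl
  · rfl
  · funext y; simp only [Pi.add_apply, Pi.sub_apply]; ring
  · ring

lemma phi_hasDerivAt2 {α x : ℝ} (hx : x ≠ 0) (hx1 : (1:ℝ) - x ≠ 0) :
    HasDerivAt (fun x : ℝ => -(α*(1-x)^(α-1)) - α*x^(α-1) + 2)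
      (α*(α-1)*(1-x)^(α-2) - α*(α-1)*x^(α-2)) x := by
  have h1 : HasDerivAt (fun x : ℝ => (1-x)^(α-1)) (-1 * (α-1) * (1-x)^(α-1-1)) x := by
    simpa using HasDerivAt.rpow_const (p := α-1) ((hasDerivAt_id x).const_sub 1) (Or.inl hx1)
  have h2 : HasDerivAt (fun x : ℝ => x^(α-1)) ((α-1)*x^(α-1-1)) x :=
    Real.hasDerivAt_rpow_const (Or.inl hx)
  have h := (((h1.const_mul α).neg).sub (h2.const_mul α)).add_const 2
  convert h using 1
  · rfl
  · rfl
  · rfl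
  rw [show α - 1 - 1 = α - 2 from by ring]
  ring

lemma phi_continuousOn {α : ℝ} (hα : 0 < α) :
    ContinuousOn (fun x : ℝ => (1-x)^α - x^α + 2*x - 1) (Icc 0 (1/2)) := by
  apply Continuous.continuousOn
  have h1 : Continuous (fun x : ℝ => (1-x)^α) :=
    (Real.continuous_rpow_const hα.le).comp (continuous_const.sub continuous_id)
  have h2 : Continuous (fun x : ℝ => x^α) := Real.continuous_rpow_const hα.le
  exact ((h1.sub h2).add (continuous_const.mul continuous_id)).sub continuous_const

lemma phi_concaveOn {α : ℝ} (hα1 : 1 < α) (hα2 : α < 2) :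
    ConcaveOn ℝ (Icc 0 (1/2)) (fun x : ℝ => (1-x)^α - x^α + 2*x - 1) := by
  apply concaveOn_of_hasDerivWithinAt2_nonpos (f' := fun x => -(α*(1-x)^(α-1)) - α*x^(α-1) + 2)
    (f'' := fun x => α*(α-1)*(1-x)^(α-2) - α*(α-1)*x^(α-2))
    (convex_Icc _ _) (phi_continuousOn (by linarith))
  · intro x hx
    rw [interior_Icc] at hx
    exact (phi_hasDerivAt (ne_of_gt hx.1)
      (by have := hx.2; norm_num at this ⊢; linarith)).hasDerivWithinAt
  · intro x hx
    rw [interior_Icc] at hx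
    exact (phi_hasDerivAt2 (ne_of_gt hx.1)
      (by have := hx.2; norm_num at this ⊢; linarith)).hasDerivWithinAt
  · intro x hx
    rw [interior_Icc] at hx
    have hx0 : (0:ℝ) < x := hx.1
    have hxle : x ≤ 1 - x := by have := hx.2; norm_num at this; linarith
    have hcmp : (1-x)^(α-2) ≤ x^(α-2) :=
      Real.rpow_le_rpow_of_nonpos hx0 hxle (by linarith)
    nlinarith [mul_pos (by linarith : (0:ℝ) < α) (by linarith : (0:ℝ) < α - 1)]

lemma phi_convexOn {α : ℝ} (hα : 0 < α) (h : α < 1 ∨ 2 < α) :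
    ConvexOn ℝ (Icc 0 (1/2)) (fun x : ℝ => (1-x)^α - x^α + 2*x - 1) := by
  apply convexOn_of_hasDerivWithinAt2_nonneg (f' := fun x => -(α*(1-x)^(α-1)) - α*x^(α-1) + 2)
    (f'' := fun x => α*(α-1)*(1-x)^(α-2) - α*(α-1)*x^(α-2))
    (convex_Icc _ _) (phi_continuousOn hα)
  · intro x hx
    rw [interior_Icc] at hx
    exact (phi_hasDerivAt (ne_of_gt hx.1)
      (by have := hx.2; norm_num at this ⊢; linarith)).hasDerivWithinAt
  · intro x hx
    rw [interior_Icc] at hx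
    exact (phi_hasDerivAt2 (ne_of_gt hx.1)
      (by have := hx.2; norm_num at this ⊢; linarith)).hasDerivWithinAt
  · intro x hx
    rw [interior_Icc] at hx
    have hx0 : (0:ℝ) < x := hx.1
    have hxle : x ≤ 1 - x := by have := hx.2; norm_num at this; linarith
    rcases h with h | h
    · have hcmp : (1-x)^(α-2) ≤ x^(α-2) :=
        Real.rpow_le_rpow_of_nonpos hx0 hxle (by linarith)
      nlinarith [mul_pos hα (by linarith : (0:ℝ) < 1 - α)]
    · have hcmp : x^(α-2) ≤ (1-x)^(α-2) :=
        Real.rpow_le_rpow hx0.le hxle (by linarith)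
      nlinarith [mul_pos hα (by linarith : (0:ℝ) < α - 1)]

lemma key_sum_nonneg {N : ℕ} (f : ℝ → ℝ) (hconc : ConcaveOn ℝ (Icc 0 (1/2)) f)
    (hf0 : f 0 = 0) (hfh : f (1/2) = 0)
    (hsym : ∀ s : ℝ, 0 ≤ s → s ≤ 1/2 → f (1 - s) = - f s)
    (p : Fin N → ℝ) (hp : ∀ i, 0 ≤ p i) (hsum : ∑ i, p i = 1) :
    0 ≤ ∑ i, f (p i) := by
  have hmem : ∀ x : ℝ, 0 ≤ x → x ≤ 1/2 → x ∈ Icc (0:ℝ) (1/2) := fun x h1 h2 => ⟨h1, h2⟩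
  have hnn : ∀ x : ℝ, 0 ≤ x → x ≤ 1/2 → 0 ≤ f x := by
    intro x h1 h2
    have h := hconc.2 (hmem 0 le_rfl (by norm_num)) (hmem (1/2) (by norm_num) le_rfl)
      (show (0:ℝ) ≤ 1 - 2*x by linarith) (show (0:ℝ) ≤ 2*x by linarith)
      (show (1 - 2*x) + 2*x = 1 by ring)
    have hpt : (1 - 2*x) • (0:ℝ) + (2*x) • ((1:ℝ)/2) = x := by
      rw [smul_eq_mul, smul_eq_mul]; ring
    rw [hpt, hf0, hfh] at h
    simpa using h
  have hchord : ∀ s x : ℝ, 0 ≤ x → x ≤ s → s ≤ 1/2 → x * f s ≤ s * f x := by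
    intro s x hx0 hxs hsh
    rcases eq_or_lt_of_le (hx0.trans hxs) with hs0 | hs0
    · have hxz : x = 0 := le_antisymm (hs0 ▸ hxs) hx0
      simp [hxz, ← hs0, hf0]
    · have hsne : s ≠ 0 := ne_of_gt hs0
      have h := hconc.2 (hmem 0 le_rfl (by norm_num)) (hmem s (by linarith) hsh)
        (show (0:ℝ) ≤ 1 - x/s by
          have hd : x/s ≤ 1 := (div_le_one hs0).mpr hxs
          linarith)
        (show (0:ℝ) ≤ x/s from div_nonneg hx0 hs0.le)
        (show (1 - x/s) + x/s = 1 by ring)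
      have hpt : (1 - x/s) • (0:ℝ) + (x/s) • s = x := by
        rw [smul_eq_mul, smul_eq_mul]; field_simp; ring
      rw [hpt, hf0] at h
      have h2 : (x/s) * f s ≤ f x := by simpa [smul_eq_mul] using h
      have h3 := mul_le_mul_of_nonneg_left h2 hs0.le
      calc x * f s = s * ((x/s) * f s) := by field_simp
        _ ≤ s * f x := h3
  by_cases hall : ∀ i, p i ≤ 1/2
  · exact Finset.sum_nonneg fun i _ => hnn _ (hp i) (hall i)
  · push_neg at hall
    obtain ⟨j, hj⟩ := hall
    set s := ∑ i ∈ Finset.univ.erase j, p i with hs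
    have hsj : s + p j = 1 := by
      rw [hs, Finset.sum_erase_add _ _ (Finset.mem_univ j)]; exact hsum
    have hs0 : 0 ≤ s := Finset.sum_nonneg fun i _ => hp i
    have hsh : s ≤ 1/2 := by linarith
    have hsplit : ∑ i, f (p i) = f (p j) + ∑ i ∈ Finset.univ.erase j, f (p i) :=
      (Finset.add_sum_erase _ _ (Finset.mem_univ j)).symm
    have hpj : p j = 1 - s := by linarith
    have hfpj : f (p j) = - f s := by rw [hpj]; exact hsym s hs0 hsh
    have h5 : ∑ i ∈ Finset.univ.erase j, p i * f s ≤ ∑ i ∈ Finset.univ.erase j, s * f (p i) :=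
      Finset.sum_le_sum fun i hi =>
        hchord s (p i) (hp i) (Finset.single_le_sum (fun i _ => hp i) hi) hsh
    rw [← Finset.sum_mul, ← hs, ← Finset.mul_sum] at h5
    rcases eq_or_lt_of_le hs0 with hs0' | hs0'
    · have hz : ∀ i ∈ Finset.univ.erase j, p i = 0 :=
        (Finset.sum_eq_zero_iff_of_nonneg (fun i _ => hp i)).mp hs0'.symm
      have hzz : ∑ i ∈ Finset.univ.erase j, f (p i) = 0 :=
        Finset.sum_eq_zero fun i hi => by rw [hz i hi, hf0]
      rw [hsplit, hfpj, ← hs0', hzz, hf0]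
      norm_num
    · have h6 : f s ≤ ∑ i ∈ Finset.univ.erase j, f (p i) :=
        le_of_mul_le_mul_left h5 hs0'
      rw [hsplit, hfpj]
      linarith

theorem tsallis_entropy_vs_extropy (N : ℕ) (hN : 3 ≤ N) (p : Fin N → ℝ)
    (hp : ∀ i, 0 ≤ p i) (hsum : ∑ i, p i = 1)
    (α : ℝ) (hα : 0 < α) (hα1 : α ≠ 1) :
    (α < 2 → ((N : ℝ) - 1 - ∑ i, (1 - p i) ^ α) / (α - 1) ≤
        (1 - ∑ i, (p i) ^ α) / (α - 1)) ∧
    (2 < α → (1 - ∑ i, (p i) ^ α) / (α - 1) ≤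
        ((N : ℝ) - 1 - ∑ i, (1 - p i) ^ α) / (α - 1)) := by
  have hf0 : ((1:ℝ)-0)^α - (0:ℝ)^α + 2*0 - 1 = 0 := by
    rw [Real.zero_rpow (ne_of_gt hα)]; norm_num
  have hfh : ((1:ℝ)-1/2)^α - ((1:ℝ)/2)^α + 2*(1/2) - 1 = 0 := by norm_num
  have hsym : ∀ s : ℝ, (1-(1-s))^α - (1-s)^α + 2*(1-s) - 1
      = -((1-s)^α - s^α + 2*s - 1) := by
    intro s
    rw [show (1:ℝ)-(1-s) = s from by ring]
    ring
  have hsumid : ∑ i, ((1 - p i)^α - (p i)^α + 2*(p i) - 1)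
      = (∑ i, (1 - p i)^α) - (∑ i, (p i)^α) + 2 - N := by
    rw [Finset.sum_sub_distrib, Finset.sum_add_distrib, Finset.sum_sub_distrib,
      ← Finset.mul_sum, hsum, Finset.sum_const, Finset.card_univ, Fintype.card_fin,
      nsmul_eq_mul, mul_one]
    ring
  have hdivneg : ∀ a b : ℝ, α - 1 < 0 → a ≤ b → b / (α-1) ≤ a / (α-1) := by
    intro a b hc hab
    rw [div_eq_mul_inv, div_eq_mul_inv]
    exact mul_le_mul_of_nonpos_right hab (inv_nonpos.mpr hc.le)
  have hdivpos : ∀ a b : ℝ, 0 < α - 1 → a ≤ b → a / (α-1) ≤ b / (α-1) := by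
    intro a b hc hab
    rw [div_eq_mul_inv, div_eq_mul_inv]
    exact mul_le_mul_of_nonneg_right hab (inv_nonneg.mpr hc.le)
  constructor
  · intro h2
    rcases lt_or_gt_of_ne hα1 with h1 | h1
    · -- α < 1
      have hkey := key_sum_nonneg (fun x => -((1-x)^α - x^α + 2*x - 1))
        (by exact (phi_convexOn hα (Or.inl h1)).neg)
        (by rw [hf0]; norm_num)
        (by rw [hfh]; norm_num)
        (fun s _ _ => by rw [hsym s])
        p hp hsum
      rw [Finset.sum_neg_distrib, hsumid] at hkey
      exact hdivneg _ _ (by linarith) (by linarith)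
    · -- 1 < α < 2
      have hkey := key_sum_nonneg (fun x => (1-x)^α - x^α + 2*x - 1)
        (phi_concaveOn h1 h2)
        (by rw [hf0])
        (by rw [hfh])
        (fun s _ _ => by rw [hsym s])
        p hp hsum
      rw [hsumid] at hkey
      exact hdivpos _ _ (by linarith) (by linarith)
  · intro h2
    have hkey := key_sum_nonneg (fun x => -((1-x)^α - x^α + 2*x - 1))
      (by exact (phi_convexOn hα (Or.inr h2)).neg)
      (by rw [hf0]; norm_num)
      (by rw [hfh]; norm_num)
      (fun s _ _ => by rw [hsym s])
      p hp hsum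
    rw [Finset.sum_neg_distrib, hsumid] at hkey
    exact hdivpos _ _ (by linarith) (by linarith)
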